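/- arXiv:1907.09834 — 2 statements merged into one kernel-verified Lean document; each statement's English description precedes it below -/
import Mathlib

section
/- Let δ ∈ (0,1) and let a, a', s', r' be points in Euclidean space such that a' lies on the segment from a to r' (with d(a,a') ≤ d(a,r')) and d(s',r') ≤ (√δ/2)·d(a',r'). Then d(a,s') - d(a',s') ≥ ((1+δ/4)/(1+δ/2))·d(a,a'). -/
open RealInnerProductSpace

private lemma lemC (δ : ℝ) (hδ0 : 0 < δ) (hδ1 : δ < 1) :
    (1 + δ/4)/(1 + δ/2) ≤ Real.sqrt (1 - δ/4) := by
  have hs0 : (0:ℝ) ≤ Real.sqrt (1 - δ/4) := Real.sqrt_nonneg _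
  have hssq : (Real.sqrt (1 - δ/4))^2 = 1 - δ/4 := Real.sq_sqrt (by linarith)
  have hc0 : (0:ℝ) ≤ (1 + δ/4)/(1 + δ/2) := by positivity
  have h2 : ((1 + δ/4)/(1 + δ/2))^2 ≤ (Real.sqrt (1 - δ/4))^2 := by
    rw [hssq, div_pow, div_le_iff₀ (by positivity)]
    nlinarith [sq_nonneg δ]
  nlinarith

private lemma lemA (δ P D V : ℝ) (hδ0 : 0 < δ) (hδ1 : δ < 1) (hD : 0 ≤ D) (hV : 0 ≤ V)
    (h : V^2 - 2*P + D^2 ≤ δ/4 * D^2) : Real.sqrt (1 - δ/4) * (D * V) ≤ P := by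
  have hs0 : (0:ℝ) ≤ Real.sqrt (1 - δ/4) := Real.sqrt_nonneg _
  have hssq : (Real.sqrt (1 - δ/4))^2 = 1 - δ/4 := Real.sq_sqrt (by linarith)
  nlinarith [sq_nonneg (V - Real.sqrt (1 - δ/4) * D)]

private lemma lemFinal (c x y z : ℝ) (hc0 : 0 ≤ c) (hc1 : c ≤ 1) (hx : 0 ≤ x) (hy : 0 ≤ y)
    (hz : 0 ≤ z) (hsq : x^2 + 2*(c*(x*y)) + y^2 ≤ z^2) : y + c*x ≤ z := by
  have h3 : (y + c*x)^2 ≤ z^2 := by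
    nlinarith [mul_nonneg (mul_nonneg (sub_nonneg.2 hc1) (by linarith : (0:ℝ) ≤ 1 + c)) (sq_nonneg x)]
  have h4 := Real.sqrt_le_sqrt h3
  rwa [Real.sqrt_sq (by positivity), Real.sqrt_sq hz] at h4

theorem aux {E : Type*} [NormedAddCommGroup E] [InnerProductSpace ℝ E]
    (δ : ℝ) (hδ : δ ∈ Set.Ioo (0:ℝ) 1)
    (a a' s' r' : E)
    (hseg : dist a a' + dist a' r' = dist a r')
    (hle : dist a a' ≤ dist a r')
    (hs : dist s' r' ≤ (Real.sqrt δ / 2) * dist a' r') :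
    dist a s' - dist a' s' ≥ ((1 + δ/4)/(1 + δ/2)) * dist a a' := by
  obtain ⟨hδ0, hδ1⟩ := hδ
  have hc0 : (0:ℝ) ≤ (1 + δ/4)/(1 + δ/2) := by positivity
  have hc1 : (1 + δ/4)/(1 + δ/2) ≤ 1 := by
    rw [div_le_one (by linarith)]; linarith
  have hdaa' : dist a a' = ‖a' - a‖ := by rw [dist_comm, dist_eq_norm]
  have hda'r : dist a' r' = ‖r' - a'‖ := by rw [dist_comm, dist_eq_norm]
  have hda's : dist a' s' = ‖s' - a'‖ := by rw [dist_comm, dist_eq_norm]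
  have hdas : dist a s' = ‖(a' - a) + (s' - a')‖ := by
    rw [dist_comm, dist_eq_norm]; congr 1; abel
  have hdar : dist a r' = ‖(a' - a) + (r' - a')‖ := by
    rw [dist_comm, dist_eq_norm]; congr 1; abel
  have hdsr : dist s' r' = ‖(s' - a') - (r' - a')‖ := by
    rw [dist_eq_norm]; congr 1; abel
  -- collinearity
  have huw : ⟪a' - a, r' - a'⟫ = ‖a' - a‖ * ‖r' - a'‖ := by
    have h := hseg
    rw [hdaa', hda'r, hdar] at h
    have hsq : ‖(a' - a) + (r' - a')‖^2 = (‖a' - a‖ + ‖r' - a'‖)^2 := by rw [h]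
    rw [norm_add_sq_real] at hsq
    nlinarith
  rcases eq_or_ne (a' - a) 0 with hu0 | hu0
  · rw [hdaa', hda's, hdas, hu0]
    simp
  rcases eq_or_ne (r' - a') 0 with hw0 | hw0
  · have hv0 : (s' - a') = 0 := by
      rw [hdsr, hda'r, hw0] at hs
      simpa using hs
    rw [hdaa', hda's, hdas, hv0]
    simp only [add_zero, norm_zero, sub_zero, ge_iff_le]
    calc (1 + δ/4)/(1 + δ/2) * ‖a' - a‖ ≤ 1 * ‖a' - a‖ :=
          mul_le_mul_of_nonneg_right hc1 (norm_nonneg _)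
      _ = ‖a' - a‖ := one_mul _
  have hDpos : 0 < ‖r' - a'‖ := norm_pos_iff.mpr hw0
  have hupos : 0 < ‖a' - a‖ := norm_pos_iff.mpr hu0
  -- constraint
  have hcon : ‖s' - a'‖^2 - 2 * ⟪r' - a', s' - a'⟫ + ‖r' - a'‖^2 ≤ δ/4 * ‖r' - a'‖^2 := by
    have h := hs
    rw [hdsr, hda'r] at h
    have h2 : ‖(s' - a') - (r' - a')‖^2 ≤ (Real.sqrt δ / 2 * ‖r' - a'‖)^2 := by
      apply sq_le_sq' _ h
      nlinarith [norm_nonneg ((s' - a') - (r' - a'))]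
    rw [norm_sub_sq_real, mul_pow, div_pow, Real.sq_sqrt hδ0.le] at h2
    rw [real_inner_comm (r' - a') (s' - a')] at h2
    linarith
  -- claim A
  have hA : Real.sqrt (1 - δ/4) * (‖r' - a'‖ * ‖s' - a'‖) ≤ ⟪r' - a', s' - a'⟫ :=
    lemA δ _ _ _ hδ0 hδ1 (norm_nonneg _) (norm_nonneg _) hcon
  have hcw : (1 + δ/4)/(1 + δ/2) * (‖r' - a'‖ * ‖s' - a'‖) ≤ ⟪r' - a', s' - a'⟫ := by
    refine le_trans (mul_le_mul_of_nonneg_right (lemC δ hδ0 hδ1) ?_) hA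
    positivity
  -- transfer to u
  have hparallel : ‖r' - a'‖ • (a' - a) = ‖a' - a‖ • (r' - a') :=
    inner_eq_norm_mul_iff_real.mp huw
  have huv : (1 + δ/4)/(1 + δ/2) * (‖a' - a‖ * ‖s' - a'‖) ≤ ⟪a' - a, s' - a'⟫ := by
    have h1 : ‖r' - a'‖ * ⟪a' - a, s' - a'⟫ = ‖a' - a‖ * ⟪r' - a', s' - a'⟫ := by
      have h := congrArg (fun x => ⟪x, s' - a'⟫) hparallel
      simpa [real_inner_smul_left] using h
    have h2 : ‖r' - a'‖ * ((1 + δ/4)/(1 + δ/2) * (‖a' - a‖ * ‖s' - a'‖))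
        ≤ ‖r' - a'‖ * ⟪a' - a, s' - a'⟫ := by
      rw [h1]
      calc ‖r' - a'‖ * ((1 + δ/4)/(1 + δ/2) * (‖a' - a‖ * ‖s' - a'‖))
          = ‖a' - a‖ * ((1 + δ/4)/(1 + δ/2) * (‖r' - a'‖ * ‖s' - a'‖)) := by ring
        _ ≤ ‖a' - a‖ * ⟪r' - a', s' - a'⟫ :=
            mul_le_mul_of_nonneg_left hcw (norm_nonneg _)
    exact le_of_mul_le_mul_left h2 hDpos
  -- final
  rw [hdaa', hda's, hdas]
  have hsq : ‖a' - a‖^2 + 2*((1 + δ/4)/(1 + δ/2) * (‖a' - a‖ * ‖s' - a'‖)) + ‖s' - a'‖^2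
      ≤ ‖(a' - a) + (s' - a')‖^2 := by
    rw [norm_add_sq_real]
    linarith
  have := lemFinal ((1 + δ/4)/(1 + δ/2)) ‖a' - a‖ ‖s' - a'‖ ‖(a' - a) + (s' - a')‖
    hc0 hc1 (norm_nonneg _) (norm_nonneg _) (norm_nonneg _) hsq
  linarith

theorem stmt2 {n : ℕ} (δ : ℝ) (hδ : δ ∈ Set.Ioo (0:ℝ) 1)
    (a a' s' r' : EuclideanSpace ℝ (Fin n))
    (hseg : dist a a' + dist a' r' = dist a r')
    (hle : dist a a' ≤ dist a r')
    (hs : dist s' r' ≤ (Real.sqrt δ / 2) * dist a' r') :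
    dist a s' - dist a' s' ≥ ((1 + δ/4)/(1 + δ/2)) * dist a a' :=
  aux δ hδ a a' s' r' hseg hle hs
end

section
/- Let k ≥ 1, α ≥ 0, β ≥ 0, T_0 ≥ 0 with k·α < 1. Define recursively A_i = α·T_{i-1} + β and T_i = T_{i-1} + A_i for 1 ≤ i ≤ k. Then ∑_{i=1}^{k} A_i ≤ (k·α·T_0 + k·β)/(1 - k·α). -/
theorem stmt8 (k : ℕ) (hk : 1 ≤ k) (α β T₀ : ℝ) (hα : 0 ≤ α) (hβ : 0 ≤ β)
    (hT₀ : 0 ≤ T₀) (hkα : (k:ℝ) * α < 1) (A T : ℕ → ℝ) (h0 : T 0 = T₀)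
    (hA : ∀ i ∈ Finset.Icc 1 k, A i = α * T (i-1) + β)
    (hT : ∀ i ∈ Finset.Icc 1 k, T i = T (i-1) + A i) :
    ∑ i ∈ Finset.Icc 1 k, A i ≤ ((k:ℝ) * α * T₀ + (k:ℝ) * β) / (1 - (k:ℝ) * α) := by
  set S := ∑ i ∈ Finset.Icc 1 k, A i with hS
  have hTnn : ∀ i, i ≤ k → 0 ≤ T i := by
    intro i
    induction i with
    | zero => intro _; rw [h0]; exact hT₀
    | succ n ih =>
      intro hn
      have hmem : n + 1 ∈ Finset.Icc 1 k := Finset.mem_Icc.mpr ⟨by omega, hn⟩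
      rw [hT _ hmem, hA _ hmem]
      simp only [Nat.add_sub_cancel]
      have := ih (by omega)
      nlinarith
  have hAnn : ∀ i ∈ Finset.Icc 1 k, 0 ≤ A i := by
    intro i hi
    obtain ⟨h1, h2⟩ := Finset.mem_Icc.mp hi
    rw [hA i hi]
    have := hTnn (i - 1) (by omega)
    nlinarith
  have hSnn : 0 ≤ S := Finset.sum_nonneg hAnn
  have hTeq : ∀ i, i ≤ k → T i = T₀ + ∑ j ∈ Finset.Icc 1 i, A j := by
    intro i
    induction i with
    | zero => intro _; simp [h0]
    | succ n ih =>
      intro hn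
      have hmem : n + 1 ∈ Finset.Icc 1 k := Finset.mem_Icc.mpr ⟨by omega, hn⟩
      rw [hT _ hmem]
      simp only [Nat.add_sub_cancel]
      rw [ih (by omega), Finset.sum_Icc_succ_top (by omega : 1 ≤ n + 1)]
      ring
  have hTle : ∀ i, i ≤ k → T i ≤ T₀ + S := by
    intro i hi
    rw [hTeq i hi]
    have : ∑ j ∈ Finset.Icc 1 i, A j ≤ S :=
      Finset.sum_le_sum_of_subset_of_nonneg (Finset.Icc_subset_Icc_right hi)
        (fun j hj _ => hAnn j hj)
    linarith
  have hSle : S ≤ (k : ℝ) * (α * (T₀ + S) + β) := by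
    have hstep : ∀ i ∈ Finset.Icc 1 k, A i ≤ α * (T₀ + S) + β := by
      intro i hi
      obtain ⟨h1, h2⟩ := Finset.mem_Icc.mp hi
      rw [hA i hi]
      have hTb := hTle (i - 1) (by omega)
      nlinarith
    calc S ≤ ∑ _i ∈ Finset.Icc 1 k, (α * (T₀ + S) + β) := Finset.sum_le_sum hstep
    _ = (k : ℝ) * (α * (T₀ + S) + β) := by
        rw [Finset.sum_const, Nat.card_Icc]
        simp only [Nat.add_sub_cancel, nsmul_eq_mul]
  rw [le_div_iff₀ (by linarith)]
  nlinarith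
end
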